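/- arXiv:1811.03375 — 5 statements merged into one kernel-verified Lean document; each statement's English description precedes it below -/
import Mathlib

section
/- Let q be a prime power, A ⊆ F_q^* of cardinality A ≥ 1, t a positive integer, and B a (t,A,q)-packing set of cardinality B. Then B < t·(q^{1/t}/A + 1). -/
lemma nat_pow_le_choose : ∀ t n : ℕ, t ≤ n → n ^ t ≤ t ^ t * n.choose t := by
  intro t
  induction t with
  | zero => intro n _; simp
  | succ t ih =>
    intro n hn
    obtain ⟨m, rfl⟩ : ∃ m, n = m + 1 := ⟨n - 1, by omega⟩
    have htm : t ≤ m := by omega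
    have key : (t + 1) * Nat.choose (m + 1) (t + 1) = (m + 1) * Nat.choose m t := by
      rw [mul_comm]
      exact (Nat.add_one_mul_choose_eq m t).symm
    have main : (m + 1) ^ t ≤ (t + 1) ^ t * Nat.choose m t := by
      rcases Nat.eq_zero_or_pos t with rfl | htpos
      · simp
      · have h1 : (m + 1) ^ t * t ^ t ≤ (t + 1) ^ t * m ^ t := by
          calc (m + 1) ^ t * t ^ t = ((m + 1) * t) ^ t := by rw [mul_pow]
            _ ≤ ((t + 1) * m) ^ t := Nat.pow_le_pow_left (by nlinarith) t
            _ = (t + 1) ^ t * m ^ t := by rw [mul_pow]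
        have h2 : (t + 1) ^ t * m ^ t ≤ (t + 1) ^ t * (t ^ t * Nat.choose m t) :=
          Nat.mul_le_mul_left _ (ih m htm)
        have h3 : (m + 1) ^ t * t ^ t ≤ ((t + 1) ^ t * Nat.choose m t) * t ^ t := by
          calc (m + 1) ^ t * t ^ t ≤ (t + 1) ^ t * (t ^ t * Nat.choose m t) := le_trans h1 h2
            _ = ((t + 1) ^ t * Nat.choose m t) * t ^ t := by ring
        exact Nat.le_of_mul_le_mul_right h3 (Nat.pow_pos htpos)
    calc (m + 1) ^ (t + 1) = (m + 1) * (m + 1) ^ t := by ring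
      _ ≤ (m + 1) * ((t + 1) ^ t * Nat.choose m t) := Nat.mul_le_mul_left _ main
      _ = (t + 1) ^ t * ((m + 1) * Nat.choose m t) := by ring
      _ = (t + 1) ^ t * ((t + 1) * Nat.choose (m + 1) (t + 1)) := by rw [key]
      _ = (t + 1) ^ (t + 1) * Nat.choose (m + 1) (t + 1) := by ring



/-- `B` is a `(t, A, q)`-packing set in the finite field `F` (of `q` elements):
`B` is a nonempty set of nonzero elements such that for every `x ∈ F` there is at
most one vector `a = (a_b)_{b ∈ B}` with entries in `A ∪ {0}` and Hamming weight
at most `t` with `∑_{b ∈ B} a_b • b = x`. -/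
def IsPackingSet {F : Type*} [Field F] [DecidableEq F]
    (A : Finset F) (t : ℕ) (B : Finset F) : Prop :=
  B.Nonempty ∧ (0 : F) ∉ B ∧
    ∀ a₁ a₂ : F → F,
      (∀ b ∈ B, a₁ b ∈ A ∨ a₁ b = 0) → (∀ b ∈ B, a₂ b ∈ A ∨ a₂ b = 0) →
      (B.filter fun b => a₁ b ≠ 0).card ≤ t →
      (B.filter fun b => a₂ b ≠ 0).card ≤ t →
      (∑ b ∈ B, a₁ b * b) = (∑ b ∈ B, a₂ b * b) →
      ∀ b ∈ B, a₁ b = a₂ b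

/-- A maximal `(t, A, q)`-packing set: no nonzero element outside `B` can be adjoined. -/
def IsMaximalPackingSet {F : Type*} [Field F] [DecidableEq F]
    (A : Finset F) (t : ℕ) (B : Finset F) : Prop :=
  IsPackingSet A t B ∧
    ∀ u : F, u ≠ 0 → u ∉ B → ¬ IsPackingSet A t (insert u B)

theorem upper_bound_B {F : Type*} [Field F] [Fintype F] [DecidableEq F]
    (A B : Finset F) (t : ℕ) (hA : 1 ≤ A.card) (hA0 : (0 : F) ∉ A) (ht : 0 < t)
    (hB : IsPackingSet A t B) :
    (B.card : ℝ) < t * ((Fintype.card F : ℝ) ^ ((1 : ℝ) / t) / A.card + 1) := by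
  have htR : (0 : ℝ) < (t : ℝ) := by exact_mod_cast ht
  have haR : (0 : ℝ) < (A.card : ℝ) := by exact_mod_cast hA
  have haR1 : (1 : ℝ) ≤ (A.card : ℝ) := by exact_mod_cast hA
  have hq2 : 1 < Fintype.card F := Fintype.one_lt_card
  have hqR : (0 : ℝ) < (Fintype.card F : ℝ) := by positivity
  have hy0 : (0 : ℝ) < (Fintype.card F : ℝ) ^ ((1 : ℝ) / t) := Real.rpow_pos_of_pos hqR _
  rcases le_or_gt B.card t with hle | hlt
  · have h1 : (B.card : ℝ) ≤ (t : ℝ) := by exact_mod_cast hle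
    have h2 : (0 : ℝ) < (Fintype.card F : ℝ) ^ ((1 : ℝ) / t) / A.card := div_pos hy0 haR
    nlinarith
  -- main case : t < B.card
  · set ST : Finset F → Finset (F → F) :=
      fun T => Fintype.piFinset (fun b => if b ∈ T then A else {0}) with hST
    set S : Finset (F → F) := insert (fun _ => 0) ((B.powersetCard t).biUnion ST) with hS
    have hsupp : ∀ T g, g ∈ ST T → ∀ b, b ∈ T ↔ g b ≠ 0 := by
      intro T g hg b
      rw [hST, Fintype.mem_piFinset] at hg
      have hb := hg b
      constructor
      · intro h; rw [if_pos h] at hb; exact fun h0 => hA0 (h0 ▸ hb)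
      · intro h; by_contra hbT
        rw [if_neg hbT, Finset.mem_singleton] at hb; exact h hb
    have hmem : ∀ g ∈ S, (∀ b, g b = 0 ∨ (b ∈ B ∧ g b ∈ A)) ∧
        (B.filter fun b => g b ≠ 0).card ≤ t := by
      intro g hg
      rw [hS, Finset.mem_insert] at hg
      rcases hg with rfl | hg
      · exact ⟨fun b => Or.inl rfl, by simp⟩
      · rw [Finset.mem_biUnion] at hg
        obtain ⟨T, hT, hgT⟩ := hg
        rw [Finset.mem_powersetCard] at hT
        have hm : ∀ b, g b = 0 ∨ (b ∈ B ∧ g b ∈ A) := by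
          intro b
          by_cases hb : b ∈ T
          · refine Or.inr ⟨hT.1 hb, ?_⟩
            have := (Fintype.mem_piFinset.mp hgT) b
            rwa [if_pos hb] at this
          · left
            have := (Fintype.mem_piFinset.mp hgT) b
            rwa [if_neg hb, Finset.mem_singleton] at this
        refine ⟨hm, ?_⟩
        have hsub : (B.filter fun b => g b ≠ 0) ⊆ T := by
          intro b hb
          rw [Finset.mem_filter] at hb
          exact (hsupp T g hgT b).mpr hb.2
        calc (B.filter fun b => g b ≠ 0).card ≤ T.card := Finset.card_le_card hsub
          _ = t := hT.2
    have hinj : Set.InjOn (fun g : F → F => ∑ b ∈ B, g b * b) S := by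
      intro g1 h1 g2 h2 heq
      obtain ⟨hm1, hc1⟩ := hmem g1 h1
      obtain ⟨hm2, hc2⟩ := hmem g2 h2
      have hOnB := hB.2.2 g1 g2
        (fun b _ => (hm1 b).elim Or.inr (fun h => Or.inl h.2))
        (fun b _ => (hm2 b).elim Or.inr (fun h => Or.inl h.2))
        hc1 hc2 heq
      funext b
      by_cases hb : b ∈ B
      · exact hOnB b hb
      · have e1 : g1 b = 0 := (hm1 b).resolve_right (fun h => hb h.1)
        have e2 : g2 b = 0 := (hm2 b).resolve_right (fun h => hb h.1)
        rw [e1, e2]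
    have hcard_le : S.card ≤ Fintype.card F := by
      have := Finset.card_le_card_of_injOn (fun g : F → F => ∑ b ∈ B, g b * b)
        (fun g _ => Finset.mem_univ _) hinj
      simpa [Finset.card_univ] using this
    have hST_card : ∀ T ∈ B.powersetCard t, (ST T).card = A.card ^ t := by
      intro T hT
      rw [Finset.mem_powersetCard] at hT
      rw [hST]
      rw [Fintype.card_piFinset]
      have heq : ∀ b : F, (if b ∈ T then A else ({0} : Finset F)).card
          = if b ∈ T then A.card else 1 := by
        intro b; split <;> simp
      rw [Finset.prod_congr rfl (fun b _ => heq b), Finset.prod_ite_mem Finset.univ T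
        (fun _ => A.card), Finset.univ_inter, Finset.prod_const, hT.2]
    have hbi : ((B.powersetCard t).biUnion ST).card
        = ∑ T ∈ B.powersetCard t, (ST T).card := by
      apply Finset.card_biUnion
      intro T1 h1 T2 h2 hne
      rw [Function.onFun, Finset.disjoint_left]
      intro g hg1 hg2
      apply hne
      ext b
      rw [hsupp T1 g hg1 b, hsupp T2 g hg2 b]
    have hzero : (fun _ : F => (0 : F)) ∉ (B.powersetCard t).biUnion ST := by
      intro h
      rw [Finset.mem_biUnion] at h
      obtain ⟨T, hT, hg⟩ := h
      rw [Finset.mem_powersetCard] at hT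
      obtain ⟨b, hb⟩ := Finset.card_pos.mp (hT.2 ▸ ht)
      exact ((hsupp T _ hg b).mp hb) rfl
    have hScard : S.card = B.card.choose t * A.card ^ t + 1 := by
      rw [hS, Finset.card_insert_of_notMem hzero, hbi,
        Finset.sum_congr rfl hST_card, Finset.sum_const,
        Finset.card_powersetCard, smul_eq_mul]
    have hlt_q : B.card.choose t * A.card ^ t < Fintype.card F := by
      omega
    have h2 : B.card ^ t * A.card ^ t < t ^ t * Fintype.card F := by
      calc B.card ^ t * A.card ^ t
          ≤ (t ^ t * B.card.choose t) * A.card ^ t :=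
            Nat.mul_le_mul_right _ (nat_pow_le_choose t B.card (le_of_lt hlt))
        _ = t ^ t * (B.card.choose t * A.card ^ t) := by ring
        _ < t ^ t * Fintype.card F :=
            mul_lt_mul_of_pos_left hlt_q (Nat.pow_pos ht)
    have h2R : ((B.card : ℝ)) ^ t * (A.card : ℝ) ^ t
        < (t : ℝ) ^ t * (Fintype.card F : ℝ) := by exact_mod_cast h2
    have hx : ((B.card : ℝ) * A.card / t) ^ t < (Fintype.card F : ℝ) := by
      rw [div_pow, mul_pow, div_lt_iff₀ (by positivity : (0 : ℝ) < (t : ℝ) ^ t)]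
      linarith
    have hx0 : (0 : ℝ) ≤ (B.card : ℝ) * A.card / t := by positivity
    have hroot : (B.card : ℝ) * A.card / t < (Fintype.card F : ℝ) ^ ((1 : ℝ) / t) := by
      have hid : (B.card : ℝ) * A.card / t
          = ((((B.card : ℝ) * A.card / t) ^ t)) ^ ((1 : ℝ) / t) := by
        rw [← Real.rpow_natCast ((B.card : ℝ) * A.card / t) t, ← Real.rpow_mul hx0,
          mul_one_div, div_self (ne_of_gt htR), Real.rpow_one]
      rw [hid]
      exact Real.rpow_lt_rpow (pow_nonneg hx0 t) hx (div_pos one_pos htR)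
    have h3 : (B.card : ℝ) * A.card < (Fintype.card F : ℝ) ^ ((1 : ℝ) / t) * t :=
      (div_lt_iff₀ htR).mp hroot
    have h4 : (Fintype.card F : ℝ) ^ ((1 : ℝ) / t)
        = ((Fintype.card F : ℝ) ^ ((1 : ℝ) / t) / A.card) * A.card := by
      field_simp
    have h5 : (B.card : ℝ) * A.card
        < (((Fintype.card F : ℝ) ^ ((1 : ℝ) / t) / A.card) * t) * A.card := by
      have hrw : (((Fintype.card F : ℝ) ^ ((1 : ℝ) / t) / A.card) * t) * A.card
          = (Fintype.card F : ℝ) ^ ((1 : ℝ) / t) * t := by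
        rw [mul_right_comm, div_mul_cancel₀ _ (ne_of_gt haR)]
      rw [hrw]; exact h3
    have h6 : (B.card : ℝ) < ((Fintype.card F : ℝ) ^ ((1 : ℝ) / t) / A.card) * t :=
      lt_of_mul_lt_mul_right h5 (le_of_lt haR)
    nlinarith [div_pos hy0 haR]
end

section
/- Let q be a prime power, A ⊆ F_q^* of cardinality A ≥ 1, t a positive integer, and B a maximal (t,A,q)-packing set of cardinality B (maximal meaning that for every u ∈ F_q^* \ B, the set B ∪ {u} is not a (t,A,q)-packing set). Then Σ_{h=0}^{t} C(B+1,h) A^h · Σ_{k=1}^{t} C(B,k−1) A^k + B + 1 ≥ q. -/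
section Aux

lemma sigma_pi_inj {α β : Type*} {s₁ s₂ : Finset α} {g₁ g₂ : α → β}
    (h : (⟨s₁, fun a _ => g₁ a⟩ : Σ s : Finset α, ∀ a ∈ s, β) =
      ⟨s₂, fun a _ => g₂ a⟩) :
    s₁ = s₂ ∧ ∀ a ∈ s₁, g₁ a = g₂ a := by
  obtain ⟨h1, h2⟩ := Sigma.mk.inj_iff.mp h
  subst h1
  exact ⟨rfl, fun a ha => congrFun (congrFun (eq_of_heq h2) a) ha⟩

lemma count_le {F : Type*} [Fintype F] [DecidableEq F] [Zero F]
    (A : Finset F) (S : Finset F) (t : ℕ) :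
    ((Finset.univ : Finset (F → F)).filter fun g =>
        (∀ x, x ∉ S → g x = 0) ∧ (∀ x ∈ S, g x ∈ A ∨ g x = 0) ∧
        (S.filter fun x => g x ≠ 0).card ≤ t).card ≤
      ∑ h ∈ Finset.range (t+1), S.card.choose h * A.card ^ h := by
  classical
  set X := (Finset.range (t+1)).sigma fun h =>
      ((S.powersetCard h).sigma fun s => s.pi fun _ => A) with hX
  have hcard : X.card = ∑ h ∈ Finset.range (t+1), S.card.choose h * A.card ^ h := by
    rw [hX, Finset.card_sigma]
    refine Finset.sum_congr rfl fun h _ => ?_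
    rw [Finset.card_sigma]
    have : ∀ s ∈ S.powersetCard h, (s.pi fun _ => A).card = A.card ^ h := by
      intro s hs
      rw [Finset.card_pi, Finset.prod_const, (Finset.mem_powersetCard.mp hs).2]
    rw [Finset.sum_congr rfl this, Finset.sum_const, Finset.card_powersetCard, smul_eq_mul]
  rw [← hcard]
  refine Finset.card_le_card_of_injOn
    (fun g => ⟨(S.filter fun x => g x ≠ 0).card,
      (S.filter fun x => g x ≠ 0), fun a _ => g a⟩) ?_ ?_
  · intro g hg
    simp only [Finset.mem_coe, Finset.mem_filter, Finset.mem_univ, true_and] at hg ⊢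
    obtain ⟨h0, h1, h2⟩ := hg
    refine Finset.mem_sigma.mpr ⟨Finset.mem_range.mpr (Nat.lt_succ_of_le h2),
      Finset.mem_sigma.mpr ⟨Finset.mem_powersetCard.mpr ⟨Finset.filter_subset _ _, rfl⟩, ?_⟩⟩
    refine Finset.mem_pi.mpr fun a ha => ?_
    obtain ⟨haS, hane⟩ := Finset.mem_filter.mp ha
    rcases h1 a haS with h | h
    · exact h
    · exact absurd h hane
  · intro g₁ hg₁ g₂ hg₂ heq
    simp only [Finset.coe_filter, Set.mem_setOf_eq, Finset.mem_univ, true_and] at hg₁ hg₂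
    obtain ⟨-, h2⟩ := Sigma.mk.inj_iff.mp heq
    obtain ⟨hs, hf⟩ := sigma_pi_inj (eq_of_heq h2)
    funext x
    by_cases hxS : x ∈ S
    · by_cases hx1 : g₁ x = 0
      · by_cases hx2 : g₂ x = 0
        · rw [hx1, hx2]
        · have : x ∈ S.filter fun x => g₁ x ≠ 0 := hs ▸ Finset.mem_filter.mpr ⟨hxS, hx2⟩
          exact absurd (Finset.mem_filter.mp this).2 (not_not.mpr hx1)
      · exact hf x (Finset.mem_filter.mpr ⟨hxS, hx1⟩)
    · rw [hg₁.1 x hxS, hg₂.1 x hxS]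

lemma exists_pair {F : Type*} [Field F] [DecidableEq F]
    {A : Finset F} {t : ℕ} {B : Finset F} (hpack : IsPackingSet A t B)
    {u : F} (hu0 : u ≠ 0) (huB : u ∉ B)
    (hnot : ¬ IsPackingSet A t (insert u B)) :
    ∃ c₁ c₂ : F → F,
      (∀ b ∈ insert u B, c₁ b ∈ A ∨ c₁ b = 0) ∧
      (∀ b ∈ insert u B, c₂ b ∈ A ∨ c₂ b = 0) ∧
      ((insert u B).filter fun b => c₁ b ≠ 0).card ≤ t ∧
      ((insert u B).filter fun b => c₂ b ≠ 0).card ≤ t ∧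
      (∑ b ∈ insert u B, c₁ b * b) = (∑ b ∈ insert u B, c₂ b * b) ∧
      c₁ u ≠ c₂ u ∧ c₂ u ≠ 0 := by
  classical
  rw [IsPackingSet] at hnot
  push_neg at hnot
  have h0i : (0 : F) ∉ insert u B := by
    simp [Finset.mem_insert, Ne.symm hu0, hpack.2.1]
  obtain ⟨a₁, a₂, hc₁, hc₂, hw₁, hw₂, hsum, b₀, hb₀, hne₀⟩ :=
    hnot (Finset.insert_nonempty u B) h0i
  have key : a₁ u ≠ a₂ u := by
    intro hequ
    have hsum' : (∑ b ∈ B, a₁ b * b) = (∑ b ∈ B, a₂ b * b) := by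
      rw [Finset.sum_insert huB, Finset.sum_insert huB, hequ] at hsum
      exact add_left_cancel hsum
    have hB' : ∀ b ∈ B, a₁ b = a₂ b := by
      refine hpack.2.2 a₁ a₂ (fun b hb => hc₁ b (Finset.mem_insert_of_mem hb))
        (fun b hb => hc₂ b (Finset.mem_insert_of_mem hb)) ?_ ?_ hsum'
      · exact le_trans (Finset.card_le_card
          (Finset.filter_subset_filter _ (Finset.subset_insert u B))) hw₁
      · exact le_trans (Finset.card_le_card
          (Finset.filter_subset_filter _ (Finset.subset_insert u B))) hw₂
    rcases Finset.mem_insert.mp hb₀ with h | h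
    · exact hne₀ (h ▸ hequ)
    · exact hne₀ (hB' b₀ h)
  by_cases h2u : a₂ u = 0
  · exact ⟨a₂, a₁, hc₂, hc₁, hw₂, hw₁, hsum.symm, Ne.symm key, h2u ▸ key⟩
  · exact ⟨a₁, a₂, hc₁, hc₂, hw₁, hw₂, hsum, key, h2u⟩

/-- Encode a vector on `insert u B` as a vector on `insert 0 B`. -/
def enc {F : Type*} [DecidableEq F] [Zero F] (B : Finset F) (c : F → F) (u : F) : F → F :=
  fun x => if x ∈ B then c x else if x = 0 then c u else 0

lemma enc_mem {F : Type*} [DecidableEq F] [Zero F] {B : Finset F} (c : F → F) {u : F}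
    (hb : u ∉ B) {b : F} (hbB : b ∈ B) : enc B c u b = c b := by
  simp [enc, hbB]

lemma enc_zero {F : Type*} [DecidableEq F] [Zero F] {B : Finset F} (c : F → F) {u : F}
    (h0 : (0:F) ∉ B) : enc B c u 0 = c u := by
  simp [enc, h0]

lemma enc_out {F : Type*} [DecidableEq F] [Zero F] {B : Finset F} (c : F → F) {u : F}
    {x : F} (hx : x ∉ insert (0:F) B) : enc B c u x = 0 := by
  simp only [Finset.mem_insert, not_or] at hx
  simp [enc, hx.1, hx.2]

lemma enc_weight {F : Type*} [DecidableEq F] [Zero F] {B : Finset F} (h0 : (0:F) ∉ B)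
    {u : F} (huB : u ∉ B) (c : F → F) :
    ((insert (0:F) B).filter fun x => enc B c u x ≠ 0).card =
      ((insert u B).filter fun x => c x ≠ 0).card := by
  have hfB : (B.filter fun x => enc B c u x ≠ 0) = B.filter fun x => c x ≠ 0 :=
    Finset.filter_congr fun x hx => by rw [enc_mem c huB hx]
  rw [Finset.filter_insert, Finset.filter_insert, hfB, enc_zero c h0]
  by_cases hcu : c u ≠ 0
  · rw [if_pos hcu, if_pos hcu,
      Finset.card_insert_of_notMem (fun h => h0 (Finset.mem_filter.mp h).1),
      Finset.card_insert_of_notMem (fun h => huB (Finset.mem_filter.mp h).1)]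
  · rw [if_neg hcu, if_neg hcu]

end Aux

theorem lower_bound {F : Type*} [Field F] [Fintype F] [DecidableEq F]
    (A B : Finset F) (t : ℕ) (hA : 1 ≤ A.card) (hA0 : (0 : F) ∉ A) (ht : 0 < t)
    (hB : IsMaximalPackingSet A t B) :
    (∑ h ∈ Finset.range (t + 1), (B.card + 1).choose h * A.card ^ h) *
        (∑ k ∈ Finset.Icc 1 t, B.card.choose (k - 1) * A.card ^ k) + B.card + 1 ≥
      Fintype.card F := by
  classical
  obtain ⟨hpack, hmax⟩ := hB
  have hB0 : (0 : F) ∉ B := hpack.2.1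
  set S₀ : Finset F := insert (0:F) B with hS₀
  set U : Finset F := Finset.univ \ S₀ with hUdef
  have hUmem : ∀ u : F, u ∈ U → u ≠ 0 ∧ u ∉ B := by
    intro u hu
    simp only [hUdef, hS₀, Finset.mem_sdiff, Finset.mem_insert, not_or] at hu
    exact hu.2
  -- choose witnesses
  have hU : ∀ u : F, ∃ c₁ c₂ : F → F, u ∈ U →
      (∀ b ∈ insert u B, c₁ b ∈ A ∨ c₁ b = 0) ∧
      (∀ b ∈ insert u B, c₂ b ∈ A ∨ c₂ b = 0) ∧
      ((insert u B).filter fun b => c₁ b ≠ 0).card ≤ t ∧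
      ((insert u B).filter fun b => c₂ b ≠ 0).card ≤ t ∧
      (∑ b ∈ insert u B, c₁ b * b) = (∑ b ∈ insert u B, c₂ b * b) ∧
      c₁ u ≠ c₂ u ∧ c₂ u ≠ 0 := by
    intro u
    by_cases hu : u ∈ U
    · obtain ⟨hu0, huB⟩ := hUmem u hu
      obtain ⟨c₁, c₂, h⟩ := exists_pair hpack hu0 huB (hmax u hu0 huB)
      exact ⟨c₁, c₂, fun _ => h⟩
    · exact ⟨0, 0, fun h => absurd h hu⟩
  choose c₁ c₂ hc using hU
  set P₁ : Finset (F → F) := (Finset.univ).filter fun g =>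
      (∀ x, x ∉ S₀ → g x = 0) ∧ (∀ x ∈ S₀, g x ∈ A ∨ g x = 0) ∧
      (S₀.filter fun x => g x ≠ 0).card ≤ t with hP₁
  set P₂ : Finset (F → F) := (Finset.univ).filter fun g =>
      (∀ x, x ∉ S₀ → g x = 0) ∧ (∀ x ∈ B, g x ∈ A ∨ g x = 0) ∧ g 0 ∈ A ∧
      (S₀.filter fun x => g x ≠ 0).card ≤ t with hP₂
  -- recovery of u from the pair of encoded vectors
  have hrec : ∀ u ∈ U,
      (∑ b ∈ B, (enc B (c₂ u) u b - enc B (c₁ u) u b) * b) /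
        (enc B (c₁ u) u 0 - enc B (c₂ u) u 0) = u := by
    intro u hu
    obtain ⟨hu0, huB⟩ := hUmem u hu
    obtain ⟨-, -, -, -, hsum, hne, -⟩ := hc u hu
    rw [Finset.sum_insert huB, Finset.sum_insert huB] at hsum
    rw [enc_zero (c₁ u) hB0, enc_zero (c₂ u) hB0]
    have hsc : (∑ b ∈ B, (enc B (c₂ u) u b - enc B (c₁ u) u b) * b)
        = ∑ b ∈ B, (c₂ u b - c₁ u b) * b :=
      Finset.sum_congr rfl fun b hb => by
        rw [enc_mem (c₁ u) huB hb, enc_mem (c₂ u) huB hb]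
    rw [hsc, div_eq_iff (sub_ne_zero_of_ne hne)]
    have hsd : (∑ b ∈ B, (c₂ u b - c₁ u b) * b)
        = (∑ b ∈ B, c₂ u b * b) - (∑ b ∈ B, c₁ u b * b) := by
      rw [← Finset.sum_sub_distrib]
      exact Finset.sum_congr rfl fun b _ => by ring
    rw [hsd]
    linear_combination -hsum
  -- the encoding map lands in P₁ ×ˢ P₂
  have hmaps : ∀ u ∈ U,
      (enc B (c₁ u) u, enc B (c₂ u) u) ∈ P₁ ×ˢ P₂ := by
    intro u hu
    obtain ⟨hu0, huB⟩ := hUmem u hu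
    obtain ⟨hv1, hv2, hw1, hw2, -, -, hc2u⟩ := hc u hu
    rw [Finset.mem_product]
    dsimp only
    constructor
    · rw [hP₁, Finset.mem_filter]
      refine ⟨Finset.mem_univ _, fun x hx => enc_out _ hx, ?_, ?_⟩
      · intro x hx
        rcases Finset.mem_insert.mp hx with h | h
        · rw [h, enc_zero _ hB0]
          exact hv1 u (Finset.mem_insert_self u B)
        · rw [enc_mem _ huB h]
          exact hv1 x (Finset.mem_insert_of_mem h)
      · rw [enc_weight hB0 huB]; exact hw1
    · rw [hP₂, Finset.mem_filter]
      refine ⟨Finset.mem_univ _, fun x hx => enc_out _ hx, ?_, ?_, ?_⟩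
      · intro x hx
        rw [enc_mem _ huB hx]
        exact hv2 x (Finset.mem_insert_of_mem hx)
      · rw [enc_zero _ hB0]
        rcases hv2 u (Finset.mem_insert_self u B) with h | h
        · exact h
        · exact absurd h hc2u
      · rw [enc_weight hB0 huB]; exact hw2
  have hinj : Set.InjOn (fun u => (enc B (c₁ u) u, enc B (c₂ u) u)) U := by
    intro u hu v hv heq
    have h1 : enc B (c₁ u) u = enc B (c₁ v) v := congrArg Prod.fst heq
    have h2 : enc B (c₂ u) u = enc B (c₂ v) v := congrArg Prod.snd heq
    rw [← hrec u hu, ← hrec v hv, h1, h2]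
  have hUcard : U.card ≤ P₁.card * P₂.card := by
    rw [← Finset.card_product]
    exact Finset.card_le_card_of_injOn _ hmaps hinj
  -- bound on P₁
  have hS₀card : S₀.card = B.card + 1 := Finset.card_insert_of_notMem hB0
  have hP₁card : P₁.card ≤
      ∑ h ∈ Finset.range (t + 1), (B.card + 1).choose h * A.card ^ h := by
    have := count_le A S₀ t
    rwa [hS₀card] at this
  -- bound on P₂
  have hP₂card : P₂.card ≤
      ∑ k ∈ Finset.Icc 1 t, B.card.choose (k - 1) * A.card ^ k := by
    set P₂' : Finset (F → F) := (Finset.univ).filter fun g =>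
        (∀ x, x ∉ B → g x = 0) ∧ (∀ x ∈ B, g x ∈ A ∨ g x = 0) ∧
        (B.filter fun x => g x ≠ 0).card ≤ t - 1 with hP₂'
    have step1 : P₂.card ≤ (A ×ˢ P₂').card := by
      refine Finset.card_le_card_of_injOn
        (fun g => (g 0, Function.update g 0 0)) ?_ ?_
      · intro g hg
        rw [hP₂, Finset.mem_coe, Finset.mem_filter] at hg
        obtain ⟨-, hout, hval, h0A, hw⟩ := hg
        have hg0 : g 0 ≠ 0 := fun h => hA0 (h ▸ h0A)
        rw [Finset.mem_coe, Finset.mem_product]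
        dsimp only
        refine ⟨h0A, ?_⟩
        rw [hP₂', Finset.mem_filter]
        refine ⟨Finset.mem_univ _, ?_, ?_, ?_⟩
        · intro x hx
          by_cases hx0 : x = 0
          · rw [hx0, Function.update_self]
          · rw [Function.update_of_ne hx0]
            exact hout x (by simp [hS₀, Finset.mem_insert, hx0, hx])
        · intro x hx
          rw [Function.update_of_ne (by rintro rfl; exact hB0 hx)]
          exact hval x hx
        · have hfeq : (B.filter fun x => Function.update g 0 0 x ≠ 0)
              = B.filter fun x => g x ≠ 0 :=
            Finset.filter_congr fun x hx => by
              rw [Function.update_of_ne (by rintro rfl; exact hB0 hx)]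
          rw [hfeq]
          have : (S₀.filter fun x => g x ≠ 0)
              = insert 0 (B.filter fun x => g x ≠ 0) := by
            rw [hS₀, Finset.filter_insert, if_pos hg0]
          rw [this, Finset.card_insert_of_notMem
            (fun h => hB0 (Finset.mem_filter.mp h).1)] at hw
          omega
      · intro g₁ hg₁ g₂ hg₂ heq
        obtain ⟨h0, hup⟩ := Prod.mk_inj.mp heq
        funext x
        by_cases hx0 : x = 0
        · rw [hx0]; exact h0
        · have := congrFun hup x
          rwa [Function.update_of_ne hx0, Function.update_of_ne hx0] at this
    have step2 : (A ×ˢ P₂').card ≤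
        A.card * ∑ h ∈ Finset.range t, B.card.choose h * A.card ^ h := by
      rw [Finset.card_product]
      refine Nat.mul_le_mul_left _ ?_
      have := count_le A B (t - 1)
      rwa [Nat.sub_add_cancel ht] at this
    have step3 : A.card * (∑ h ∈ Finset.range t, B.card.choose h * A.card ^ h)
        = ∑ k ∈ Finset.Icc 1 t, B.card.choose (k - 1) * A.card ^ k := by
      rw [Finset.mul_sum, ← Finset.Ico_add_one_right_eq_Icc, Finset.sum_Ico_eq_sum_range]
      simp only [Nat.add_sub_cancel, Nat.succ_sub_one]
      refine Finset.sum_congr rfl fun i _ => ?_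
      rw [Nat.add_comm 1 i, Nat.add_sub_cancel, pow_succ]
      ring
    omega
  -- final count
  have hsplit : U.card + S₀.card = Fintype.card F := by
    rw [hUdef, Finset.card_sdiff_add_card_eq_card (Finset.subset_univ S₀),
      Finset.card_univ]
  have hmul : U.card ≤
      (∑ h ∈ Finset.range (t + 1), (B.card + 1).choose h * A.card ^ h) *
        (∑ k ∈ Finset.Icc 1 t, B.card.choose (k - 1) * A.card ^ k) :=
    le_trans hUcard (Nat.mul_le_mul hP₁card hP₂card)
  omega
end

section
/- Let q be a prime power, A ⊆ F_q^* of cardinality A, and let B be a (1,A,q)-packing set of cardinality B which is maximal (no u ∈ F_q^* \ B can be adjoined). Then B ≥ (q−1)/#(A/A) ≥ (q−1)/A^2, where A/A = {a·b^{-1} : a, b ∈ A} is the ratio set of A. -/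
/-- Structure of a weight-≤1 vector: either all entries are zero, or there is a unique
nonzero position and the sum collapses to that single term. -/
lemma weight_le_one_sum {F : Type*} [Field F] [DecidableEq F]
    (C : Finset F) (a : F → F) (h : (C.filter fun b => a b ≠ 0).card ≤ 1) :
    (∀ b ∈ C, a b = 0) ∨ ∃ b₀ ∈ C, a b₀ ≠ 0 ∧ (∑ b ∈ C, a b * b) = a b₀ * b₀ ∧
      ∀ b ∈ C, b ≠ b₀ → a b = 0 := by
  rcases Nat.le_one_iff_eq_zero_or_eq_one.mp h with h0 | h1
  · left
    intro b hb
    by_contra hab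
    have : b ∈ C.filter fun b => a b ≠ 0 := Finset.mem_filter.mpr ⟨hb, hab⟩
    simp [Finset.card_eq_zero.mp h0] at this
  · obtain ⟨b₀, hb₀⟩ := Finset.card_eq_one.mp h1
    have hmem : b₀ ∈ C.filter fun b => a b ≠ 0 := hb₀ ▸ Finset.mem_singleton_self b₀
    rw [Finset.mem_filter] at hmem
    right
    have hz : ∀ b ∈ C, b ≠ b₀ → a b = 0 := by
      intro b hb hne
      by_contra hab
      have : b ∈ C.filter fun b => a b ≠ 0 := Finset.mem_filter.mpr ⟨hb, hab⟩
      rw [hb₀, Finset.mem_singleton] at this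
      exact hne this
    refine ⟨b₀, hmem.1, hmem.2, ?_, hz⟩
    exact Finset.sum_eq_single b₀ (fun b hb hne => by rw [hz b hb hne, zero_mul])
      (fun h => absurd hmem.1 h)

theorem lower_bound_t_one {F : Type*} [Field F] [Fintype F] [DecidableEq F]
    (A B : Finset F) (hA : A.Nonempty) (hA0 : (0 : F) ∉ A)
    (hB : IsMaximalPackingSet A 1 B) :
    (B.card : ℝ) ≥ (Fintype.card F - 1) /
        ((Finset.image (fun x : F × F => x.1 * x.2⁻¹) (A ×ˢ A)).card : ℝ) ∧
      ((Fintype.card F - 1 : ℝ) /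
          ((Finset.image (fun x : F × F => x.1 * x.2⁻¹) (A ×ˢ A)).card : ℝ)) ≥
        (Fintype.card F - 1) / (A.card : ℝ) ^ 2 := by
  set R := Finset.image (fun x : F × F => x.1 * x.2⁻¹) (A ×ˢ A) with hRdef
  obtain ⟨⟨hBne, hB0, hBinj⟩, hBmax⟩ := hB
  have hAne0 : ∀ a ∈ A, a ≠ 0 := fun a ha h => hA0 (h ▸ ha)
  -- covering claim: every nonzero u is a ratio times an element of B
  have hcover : ∀ u : F, u ≠ 0 → ∃ r ∈ R, ∃ b ∈ B, u = r * b := by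
    intro u hu
    by_cases huB : u ∈ B
    · obtain ⟨a, ha⟩ := hA
      refine ⟨a * a⁻¹, Finset.mem_image.mpr ⟨(a, a), Finset.mem_product.mpr ⟨ha, ha⟩, rfl⟩,
        u, huB, ?_⟩
      rw [mul_inv_cancel₀ (hAne0 a ha), one_mul]
    · by_contra hno
      push_neg at hno
      apply hBmax u hu huB
      have h0C : (0 : F) ∉ insert u B := by
        intro h
        rcases Finset.mem_insert.mp h with h | h
        · exact hu h.symm
        · exact hB0 h
      refine ⟨⟨u, Finset.mem_insert_self u B⟩, h0C, ?_⟩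
      intro a₁ a₂ h₁ h₂ w₁ w₂ hsum
      rcases weight_le_one_sum (insert u B) a₁ w₁ with hz₁ | ⟨b₁, hb₁, hne₁, hs₁, hz₁⟩ <;>
        rcases weight_le_one_sum (insert u B) a₂ w₂ with hz₂ | ⟨b₂, hb₂, hne₂, hs₂, hz₂⟩
      · intro b hb; rw [hz₁ b hb, hz₂ b hb]
      · -- a₁ ≡ 0 but a₂ has a nonzero entry: impossible
        exfalso
        have : (∑ b ∈ insert u B, a₁ b * b) = 0 :=
          Finset.sum_eq_zero fun b hb => by rw [hz₁ b hb, zero_mul]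
        rw [this, hs₂] at hsum
        have ha₂ : a₂ b₂ ∈ A := (h₂ b₂ hb₂).resolve_right hne₂
        exact mul_ne_zero (hAne0 _ ha₂) (fun h => h0C (h ▸ hb₂)) hsum.symm
      · exfalso
        have : (∑ b ∈ insert u B, a₂ b * b) = 0 :=
          Finset.sum_eq_zero fun b hb => by rw [hz₂ b hb, zero_mul]
        rw [this, hs₁] at hsum
        have ha₁ : a₁ b₁ ∈ A := (h₁ b₁ hb₁).resolve_right hne₁
        exact mul_ne_zero (hAne0 _ ha₁) (fun h => h0C (h ▸ hb₁)) hsum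
      · have ha₁ : a₁ b₁ ∈ A := (h₁ b₁ hb₁).resolve_right hne₁
        have ha₂ : a₂ b₂ ∈ A := (h₂ b₂ hb₂).resolve_right hne₂
        have hkey : a₁ b₁ * b₁ = a₂ b₂ * b₂ := by rw [← hs₁, ← hs₂, hsum]
        rcases Finset.mem_insert.mp hb₁ with hb₁u | hb₁B <;>
          rcases Finset.mem_insert.mp hb₂ with hb₂u | hb₂B
        · -- both nonzero positions at u
          rw [hb₁u, hb₂u] at hkey
          have heq : a₁ u = a₂ u := mul_right_cancel₀ hu hkey
          intro b hb
          by_cases hbu : b = u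
          · rw [hbu]; exact heq
          · rw [hz₁ b hb (hb₁u ▸ hbu), hz₂ b hb (hb₂u ▸ hbu)]
        · -- b₁ = u, b₂ ∈ B : a collision, contradicting hno
          exfalso
          rw [hb₁u] at hkey hne₁ ha₁
          have hru : u = (a₂ b₂ * (a₁ u)⁻¹) * b₂ := by
            have h1 : a₁ u ≠ 0 := hne₁
            field_simp
            linear_combination hkey
          exact hno (a₂ b₂ * (a₁ u)⁻¹)
            (Finset.mem_image.mpr ⟨(a₂ b₂, a₁ u), Finset.mem_product.mpr ⟨ha₂, ha₁⟩, rfl⟩)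
            b₂ hb₂B hru
        · exfalso
          rw [hb₂u] at hkey hne₂ ha₂
          have hru : u = (a₁ b₁ * (a₂ u)⁻¹) * b₁ := by
            have h2 : a₂ u ≠ 0 := hne₂
            field_simp
            linear_combination -hkey
          exact hno (a₁ b₁ * (a₂ u)⁻¹)
            (Finset.mem_image.mpr ⟨(a₁ b₁, a₂ u), Finset.mem_product.mpr ⟨ha₁, ha₂⟩, rfl⟩)
            b₁ hb₁B hru
        · -- both nonzero positions in B : use that B is a packing set
          have huB₁ : u ≠ b₁ := fun h => huB (h ▸ hb₁B)
          have huB₂ : u ≠ b₂ := fun h => huB (h ▸ hb₂B)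
          have hs₁' : (∑ b ∈ B, a₁ b * b) = a₁ b₁ * b₁ :=
            Finset.sum_eq_single b₁
              (fun b hb hne => by
                rw [hz₁ b (Finset.mem_insert_of_mem hb) hne, zero_mul])
              (fun h => absurd hb₁B h)
          have hs₂' : (∑ b ∈ B, a₂ b * b) = a₂ b₂ * b₂ :=
            Finset.sum_eq_single b₂
              (fun b hb hne => by
                rw [hz₂ b (Finset.mem_insert_of_mem hb) hne, zero_mul])
              (fun h => absurd hb₂B h)
          have hBeq : ∀ b ∈ B, a₁ b = a₂ b := by
            refine hBinj a₁ a₂ (fun b hb => h₁ b (Finset.mem_insert_of_mem hb))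
              (fun b hb => h₂ b (Finset.mem_insert_of_mem hb)) ?_ ?_ ?_
            · exact le_trans (Finset.card_le_card
                (Finset.filter_subset_filter _ (Finset.subset_insert u B))) w₁
            · exact le_trans (Finset.card_le_card
                (Finset.filter_subset_filter _ (Finset.subset_insert u B))) w₂
            · rw [hs₁', hs₂', hkey]
          intro b hb
          rcases Finset.mem_insert.mp hb with hbu | hbB
          · subst hbu
            rw [hz₁ b (Finset.mem_insert_self b B) huB₁,
              hz₂ b (Finset.mem_insert_self b B) huB₂]
          · exact hBeq b hbB
  -- counting
  have hsub : ({0}ᶜ : Finset F) ⊆ Finset.image (fun p : F × F => p.1 * p.2) (R ×ˢ B) := by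
    intro u hu
    have hu0 : u ≠ 0 := by simpa using hu
    obtain ⟨r, hr, b, hb, hrb⟩ := hcover u hu0
    exact Finset.mem_image.mpr ⟨(r, b), Finset.mem_product.mpr ⟨hr, hb⟩, hrb.symm⟩
  have hcard : Fintype.card F - 1 ≤ R.card * B.card := by
    calc Fintype.card F - 1 = ({0}ᶜ : Finset F).card := by
          rw [Finset.card_compl, Finset.card_singleton]
      _ ≤ (Finset.image (fun p : F × F => p.1 * p.2) (R ×ˢ B)).card := Finset.card_le_card hsub
      _ ≤ (R ×ˢ B).card := Finset.card_image_le
      _ = R.card * B.card := Finset.card_product R B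
  obtain ⟨a, ha⟩ := hA
  have hRne : R.Nonempty :=
    ⟨a * a⁻¹, Finset.mem_image.mpr ⟨(a, a), Finset.mem_product.mpr ⟨ha, ha⟩, rfl⟩⟩
  have hRpos : (0 : ℝ) < R.card := by exact_mod_cast Finset.card_pos.mpr hRne
  have hApos : (0 : ℝ) < (A.card : ℝ) ^ 2 := by
    have : 0 < A.card := Finset.card_pos.mpr ⟨a, ha⟩
    positivity
  have hq1 : (0 : ℝ) ≤ (Fintype.card F : ℝ) - 1 := by
    have : 1 ≤ Fintype.card F := Fintype.card_pos
    have : (1 : ℝ) ≤ (Fintype.card F : ℝ) := by exact_mod_cast this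
    linarith
  have hcardR : (Fintype.card F : ℝ) - 1 ≤ (R.card : ℝ) * B.card := by
    have h1 : 1 ≤ Fintype.card F := Fintype.card_pos
    have := (Nat.cast_le (α := ℝ)).mpr hcard
    push_cast [Nat.cast_sub h1] at this
    convert this using 2
  have hRA : (R.card : ℝ) ≤ (A.card : ℝ) ^ 2 := by
    have : R.card ≤ A.card * A.card := by
      calc R.card ≤ (A ×ˢ A).card := Finset.card_image_le
        _ = A.card * A.card := Finset.card_product A A
    have := (Nat.cast_le (α := ℝ)).mpr this
    push_cast at this
    nlinarith [this]
  constructor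
  · rw [ge_iff_le, div_le_iff₀ hRpos]
    nlinarith [hcardR]
  · rw [ge_iff_le]
    exact div_le_div_of_nonneg_left hq1 hRpos hRA
end

section
/- Let q be a prime power, g ∈ F_q^* an element of multiplicative order k ≥ 2, d = ceil(sqrt(k)), and A = {g, g^2, …, g^d, g^{2d}, g^{3d}, …, g^{(d−1)d}, g^{d^2}}. Then the ratio set A/A equals the cyclic subgroup of F_q^* of order k generated by g, and #A ≤ 2d − 1. -/
theorem ratio_set_subgroup {F : Type*} [Field F] [Fintype F] [DecidableEq F]
    (g : F) (k d : ℕ) (hk : orderOf g = k) (hk2 : 2 ≤ k) (hd : d = ⌈Real.sqrt k⌉₊) :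
    Finset.image (fun x : F × F => x.1 * x.2⁻¹)
        ((Finset.image (g ^ ·) (Finset.Icc 1 d ∪ (Finset.Icc 2 d).image (· * d))) ×ˢ
          (Finset.image (g ^ ·) (Finset.Icc 1 d ∪ (Finset.Icc 2 d).image (· * d)))) =
      (Finset.range k).image (g ^ ·) ∧
    (Finset.image (g ^ ·) (Finset.Icc 1 d ∪ (Finset.Icc 2 d).image (· * d))).card ≤
      2 * d - 1 := by
  have hk0 : 0 < k := by omega
  have hg1 : g ^ k = 1 := by rw [← hk]; exact pow_orderOf_eq_one g
  have hg0 : g ≠ 0 := by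
    intro h
    rw [h, zero_pow (by omega)] at hg1
    exact one_ne_zero hg1.symm
  have hkd : k ≤ d * d := by
    have h1 : Real.sqrt k ≤ d := by rw [hd]; exact Nat.le_ceil _
    have h2 : (k : ℝ) ≤ (d : ℝ) * d := by
      calc (k : ℝ) = Real.sqrt k * Real.sqrt k := (Real.mul_self_sqrt (by positivity)).symm
        _ ≤ (d : ℝ) * d := mul_le_mul h1 h1 (Real.sqrt_nonneg _) (by positivity)
    exact_mod_cast h2
  have hd1 : 1 ≤ d := by
    rcases Nat.eq_zero_or_pos d with h | h
    · subst h; omega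
    · exact h
  have hpow : ∀ n : ℕ, ∃ m, m < k ∧ g ^ n = g ^ m := by
    intro n
    refine ⟨n % k, Nat.mod_lt _ hk0, ?_⟩
    conv_lhs => rw [← pow_mod_orderOf]
    rw [hk]
  have hinv : ∀ b : ℕ, (g ^ b)⁻¹ = g ^ (b * (k - 1)) := by
    intro b
    have hmul : g ^ b * g ^ (b * (k - 1)) = 1 := by
      rw [← pow_add]
      have he : b + b * (k - 1) = b * k := by
        have : b * k = b * (1 + (k - 1)) := by congr 1; omega
        rw [this, Nat.mul_add, Nat.mul_one]
      rw [he, mul_comm, pow_mul, hg1, one_pow]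
    exact inv_eq_of_mul_eq_one_right hmul
  constructor
  · ext x
    simp only [Finset.mem_image, Finset.mem_product, Finset.mem_range, Finset.mem_union,
      Finset.mem_Icc, Prod.exists]
    constructor
    · rintro ⟨y, z, ⟨⟨a, ha, rfl⟩, ⟨b, hb, rfl⟩⟩, rfl⟩
      have : g ^ a * (g ^ b)⁻¹ = g ^ (a + b * (k - 1)) := by
        rw [hinv, pow_add]
      rw [this]
      obtain ⟨m, hm, hgm⟩ := hpow (a + b * (k - 1))
      exact ⟨m, hm, hgm.symm⟩
    · rintro ⟨m, hm, rfl⟩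
      obtain ⟨i, hi1, hi2, key⟩ : ∃ i, 1 ≤ i ∧ i ≤ d ∧ (m / d + 1) * d = m + i := by
        have hmd : m % d < d := Nat.mod_lt _ (by omega)
        refine ⟨d - m % d, by omega, by omega, ?_⟩
        have h1 := Nat.div_add_mod m d
        have h3 : (m / d + 1) * d = d * (m / d) + d := by ring
        rw [h3]
        generalize d * (m / d) = t at h1 ⊢
        omega
      have hjle : m / d + 1 ≤ d := by
        have : m / d < d := Nat.div_lt_iff_lt_mul (by omega) |>.mpr (lt_of_lt_of_le hm hkd)
        omega
      refine ⟨g ^ ((m / d + 1) * d), g ^ i, ⟨⟨(m / d + 1) * d, ?_, rfl⟩,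
        ⟨i, Or.inl ⟨hi1, hi2⟩, rfl⟩⟩, ?_⟩
      · rcases Nat.lt_or_ge (m / d) 1 with h | h
        · left
          have h0 : m / d = 0 := Nat.lt_one_iff.mp h
          rw [h0, zero_add, one_mul]
          exact ⟨hd1, le_refl d⟩
        · right
          exact ⟨m / d + 1, ⟨by omega, hjle⟩, rfl⟩
      · rw [key, pow_add, mul_assoc, mul_inv_cancel₀ (pow_ne_zero _ hg0), mul_one]
  · calc (Finset.image (g ^ ·) (Finset.Icc 1 d ∪ (Finset.Icc 2 d).image (· * d))).card
        ≤ (Finset.Icc 1 d ∪ (Finset.Icc 2 d).image (· * d)).card := Finset.card_image_le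
      _ ≤ (Finset.Icc 1 d).card + ((Finset.Icc 2 d).image (· * d)).card :=
          Finset.card_union_le _ _
      _ ≤ d + (d - 1) := by
          refine Nat.add_le_add ?_ (le_trans Finset.card_image_le ?_) <;>
            rw [Nat.card_Icc] <;> omega
      _ ≤ 2 * d - 1 := by omega
end

section
/- Let q ≥ 11 be a prime power, A ⊆ F_q^* of cardinality A ≥ 1, t ≥ 2 a positive integer, and B a maximal (t,A,q)-packing set of cardinality B with AB ≥ 2. Then B > (q/(5A))^{1/(2t−1)}/A − 1. -/
open Finset

/-- Auxiliary: an overcounting set containing all sums `∑ b ∈ B, c b * b`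
where `c` takes values in `A ∪ {0}` and has at most `k` nonzero entries on `B`. -/
def synSet {F : Type*} [Field F] [DecidableEq F] (A B : Finset F) : ℕ → Finset F
  | 0 => {0}
  | (k+1) => synSet A B k ∪ (((A ×ˢ B) ×ˢ synSet A B k).image fun p => p.1.1 * p.1.2 + p.2)

lemma synSet_card_le {F : Type*} [Field F] [DecidableEq F] (A B : Finset F)
    (hA : 1 ≤ A.card) : ∀ k, (synSet A B k).card ≤ (A.card * (B.card + 1)) ^ k := by
  intro k
  induction k with
  | zero => simp [synSet]
  | succ k ih =>
    have h1 : (synSet A B (k+1)).card ≤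
        (synSet A B k).card + (((A ×ˢ B) ×ˢ synSet A B k).image
          fun p => p.1.1 * p.1.2 + p.2).card := by
      simpa [synSet] using card_union_le _ _
    have h2 : (((A ×ˢ B) ×ˢ synSet A B k).image
        fun p : (F × F) × F => p.1.1 * p.1.2 + p.2).card ≤ A.card * B.card * (synSet A B k).card := by
      calc _ ≤ ((A ×ˢ B) ×ˢ synSet A B k).card := card_image_le
        _ = A.card * B.card * (synSet A B k).card := by simp [card_product, mul_assoc]
    have h3 : (synSet A B (k+1)).card ≤ (1 + A.card * B.card) * (synSet A B k).card := by
      calc (synSet A B (k+1)).card ≤ _ := h1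
        _ ≤ (synSet A B k).card + A.card * B.card * (synSet A B k).card := by omega
        _ = (1 + A.card * B.card) * (synSet A B k).card := by ring
    calc (synSet A B (k+1)).card ≤ (1 + A.card * B.card) * (synSet A B k).card := h3
      _ ≤ (A.card * (B.card + 1)) * (A.card * (B.card + 1)) ^ k := by
          apply Nat.mul_le_mul _ ih
          nlinarith
      _ = (A.card * (B.card + 1)) ^ (k+1) := by ring

lemma sum_mem_synSet {F : Type*} [Field F] [DecidableEq F] (A B : Finset F) (k : ℕ)
    (c : F → F) (hc : ∀ b ∈ B, c b ∈ A ∨ c b = 0)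
    (hw : (B.filter fun b => c b ≠ 0).card ≤ k) :
    (∑ b ∈ B, c b * b) ∈ synSet A B k := by
  induction k generalizing c with
  | zero =>
    have he : B.filter (fun b => c b ≠ 0) = ∅ := card_eq_zero.mp (Nat.le_zero.mp hw)
    have hz : ∀ b ∈ B, c b * b = 0 := by
      intro b hb
      by_cases h : c b = 0
      · rw [h, zero_mul]
      · exact absurd (mem_filter.mpr ⟨hb, h⟩ : b ∈ B.filter fun b => c b ≠ 0) (by simp [he])
    rw [Finset.sum_congr rfl hz]
    simp [synSet]
  | succ k ih =>
    by_cases hle : (B.filter fun b => c b ≠ 0).card ≤ k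
    · simp only [synSet, mem_union]
      exact Or.inl (ih c hc hle)
    · have hne : (B.filter fun b => c b ≠ 0).Nonempty := by
        rw [← card_pos]; omega
      obtain ⟨b₀, hb₀⟩ := hne
      have hb₀B : b₀ ∈ B := (mem_filter.mp hb₀).1
      have hb₀c : c b₀ ≠ 0 := (mem_filter.mp hb₀).2
      set c' : F → F := Function.update c b₀ 0 with hc'
      have hfilter : B.filter (fun b => c' b ≠ 0) = (B.filter fun b => c b ≠ 0).erase b₀ := by
        ext x
        simp only [mem_filter, mem_erase, hc', Function.update]
        by_cases hx : x = b₀ <;> simp [hx]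
      have hw' : (B.filter fun b => c' b ≠ 0).card ≤ k := by
        rw [hfilter, card_erase_of_mem hb₀]
        omega
      have hc'' : ∀ b ∈ B, c' b ∈ A ∨ c' b = 0 := by
        intro b hb
        by_cases hx : b = b₀
        · subst hx; right; simp [hc']
        · rw [hc', Function.update_of_ne hx]; exact hc b hb
      have hsum : (∑ b ∈ B, c b * b) = c b₀ * b₀ + ∑ b ∈ B, c' b * b := by
        rw [← Finset.add_sum_erase B (fun b => c b * b) hb₀B,
            ← Finset.add_sum_erase B (fun b => c' b * b) hb₀B]
        have : c' b₀ = 0 := by simp [hc']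
        rw [this, zero_mul, zero_add]
        congr 1
        apply Finset.sum_congr rfl
        intro x hx
        rw [hc', Function.update_of_ne (Finset.ne_of_mem_erase hx)]
      rw [hsum]
      simp only [synSet, mem_union]
      right
      apply mem_image.mpr
      refine ⟨((c b₀, b₀), ∑ b ∈ B, c' b * b), ?_, rfl⟩
      have hcb₀A : c b₀ ∈ A := (hc b₀ hb₀B).resolve_right hb₀c
      simp only [mem_product]
      exact ⟨⟨hcb₀A, hb₀B⟩, ih c' hc'' hw'⟩

theorem lower_bound_cor {F : Type*} [Field F] [Fintype F] [DecidableEq F]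
    (A B : Finset F) (t : ℕ) (hq : 11 ≤ Fintype.card F)
    (hA : 1 ≤ A.card) (hA0 : (0 : F) ∉ A) (ht : 2 ≤ t)
    (hAB : 2 ≤ A.card * B.card) (hB : IsMaximalPackingSet A t B) :
    (B.card : ℝ) >
      ((Fintype.card F : ℝ) / (5 * A.card)) ^ ((1 : ℝ) / (2 * t - 1)) / A.card - 1 := by
  classical
  obtain ⟨⟨hBne, hB0, hinj⟩, hmax⟩ := hB
  set T := synSet A B with hTdef
  set U₁ : Finset F := ((A ×ˢ (T (t-1) ×ˢ T t)).image fun p => (p.2.2 - p.2.1) / p.1) with hU₁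
  set U₂ : Finset F := ((A ×ˢ (T t ×ˢ T (t-1))).image fun p => (p.2.1 - p.2.2) / p.1) with hU₂
  set U₃ : Finset F := (((A ×ˢ A) ×ˢ (T (t-1) ×ˢ T (t-1))).image
      fun p => (p.2.2 - p.2.1) / (p.1.1 - p.1.2)) with hU₃
  -- covering
  have hcover : (Finset.univ : Finset F) ⊆ insert 0 (B ∪ U₁ ∪ U₂ ∪ U₃) := by
    intro u _
    by_cases hu0 : u = 0
    · simp [hu0]
    by_cases huB : u ∈ B
    · simp [huB]
    have hfail := hmax u hu0 huB
    have h1 : (insert u B).Nonempty := insert_nonempty u B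
    have h2 : (0:F) ∉ insert u B := by
      simp only [mem_insert, not_or]
      exact ⟨fun h => hu0 h.symm, hB0⟩
    have hfail3 : ¬ ∀ a₁ a₂ : F → F,
        (∀ b ∈ insert u B, a₁ b ∈ A ∨ a₁ b = 0) → (∀ b ∈ insert u B, a₂ b ∈ A ∨ a₂ b = 0) →
        ((insert u B).filter fun b => a₁ b ≠ 0).card ≤ t →
        ((insert u B).filter fun b => a₂ b ≠ 0).card ≤ t →
        (∑ b ∈ insert u B, a₁ b * b) = (∑ b ∈ insert u B, a₂ b * b) →
        ∀ b ∈ insert u B, a₁ b = a₂ b := fun h => hfail ⟨h1, h2, h⟩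
    push_neg at hfail3
    obtain ⟨a₁, a₂, hm₁, hm₂, hw₁, hw₂, hsum, b', hb', hbne⟩ := hfail3
    have hm₁B : ∀ b ∈ B, a₁ b ∈ A ∨ a₁ b = 0 := fun b hb => hm₁ b (mem_insert_of_mem hb)
    have hm₂B : ∀ b ∈ B, a₂ b ∈ A ∨ a₂ b = 0 := fun b hb => hm₂ b (mem_insert_of_mem hb)
    have hwB₁ : (B.filter fun b => a₁ b ≠ 0).card ≤ t :=
      le_trans (card_le_card (filter_subset_filter _ (subset_insert u B))) hw₁
    have hwB₂ : (B.filter fun b => a₂ b ≠ 0).card ≤ t :=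
      le_trans (card_le_card (filter_subset_filter _ (subset_insert u B))) hw₂
    have hsum' : a₁ u * u + ∑ b ∈ B, a₁ b * b = a₂ u * u + ∑ b ∈ B, a₂ b * b := by
      rwa [Finset.sum_insert huB, Finset.sum_insert huB] at hsum
    have hdu : a₁ u ≠ a₂ u := by
      intro heq
      rw [heq] at hsum'
      have hSeq : (∑ b ∈ B, a₁ b * b) = ∑ b ∈ B, a₂ b * b := add_left_cancel hsum'
      have hall := hinj a₁ a₂ hm₁B hm₂B hwB₁ hwB₂ hSeq
      rcases mem_insert.mp hb' with h | h
      · exact hbne (h ▸ heq)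
      · exact hbne (hall b' h)
    have hd : a₁ u - a₂ u ≠ 0 := sub_ne_zero_of_ne hdu
    have hkey : (a₁ u - a₂ u) * u = (∑ b ∈ B, a₂ b * b) - ∑ b ∈ B, a₁ b * b := by
      linear_combination hsum'
    have himp₁ : a₁ u ≠ 0 → (B.filter fun b => a₁ b ≠ 0).card ≤ t - 1 := by
      intro h
      have heq : ((insert u B).filter fun b => a₁ b ≠ 0)
          = insert u (B.filter fun b => a₁ b ≠ 0) := by
        rw [filter_insert, if_pos h]
      rw [heq, card_insert_of_notMem (fun hc => huB (mem_filter.mp hc).1)] at hw₁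
      omega
    have himp₂ : a₂ u ≠ 0 → (B.filter fun b => a₂ b ≠ 0).card ≤ t - 1 := by
      intro h
      have heq : ((insert u B).filter fun b => a₂ b ≠ 0)
          = insert u (B.filter fun b => a₂ b ≠ 0) := by
        rw [filter_insert, if_pos h]
      rw [heq, card_insert_of_notMem (fun hc => huB (mem_filter.mp hc).1)] at hw₂
      omega
    have hS₁t : (∑ b ∈ B, a₁ b * b) ∈ T t := sum_mem_synSet A B t a₁ hm₁B hwB₁
    have hS₂t : (∑ b ∈ B, a₂ b * b) ∈ T t := sum_mem_synSet A B t a₂ hm₂B hwB₂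
    simp only [mem_insert, mem_union]
    right
    by_cases h₂0 : a₂ u = 0
    · -- u ∈ U₁
      have h₁0 : a₁ u ≠ 0 := by rw [h₂0] at hdu; exact hdu
      have hA₁ : a₁ u ∈ A := (hm₁ u (mem_insert_self u B)).resolve_right h₁0
      left; left; right
      rw [hU₁]
      apply mem_image.mpr
      refine ⟨(a₁ u, (∑ b ∈ B, a₁ b * b, ∑ b ∈ B, a₂ b * b)), ?_, ?_⟩
      · simp only [mem_product]
        exact ⟨hA₁, sum_mem_synSet A B (t-1) a₁ hm₁B (himp₁ h₁0), hS₂t⟩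
      · show ((∑ b ∈ B, a₂ b * b) - ∑ b ∈ B, a₁ b * b) / a₁ u = u
        rw [div_eq_iff h₁0]
        linear_combination -hkey - u * h₂0
    · by_cases h₁0 : a₁ u = 0
      · -- u ∈ U₂
        have hA₂ : a₂ u ∈ A := (hm₂ u (mem_insert_self u B)).resolve_right h₂0
        left; right
        rw [hU₂]
        apply mem_image.mpr
        refine ⟨(a₂ u, (∑ b ∈ B, a₁ b * b, ∑ b ∈ B, a₂ b * b)), ?_, ?_⟩
        · simp only [mem_product]
          exact ⟨hA₂, hS₁t, sum_mem_synSet A B (t-1) a₂ hm₂B (himp₂ h₂0)⟩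
        · show ((∑ b ∈ B, a₁ b * b) - ∑ b ∈ B, a₂ b * b) / a₂ u = u
          rw [div_eq_iff h₂0]
          linear_combination hkey - u * h₁0
      · -- u ∈ U₃
        have hA₁ : a₁ u ∈ A := (hm₁ u (mem_insert_self u B)).resolve_right h₁0
        have hA₂ : a₂ u ∈ A := (hm₂ u (mem_insert_self u B)).resolve_right h₂0
        right
        rw [hU₃]
        apply mem_image.mpr
        refine ⟨((a₁ u, a₂ u), (∑ b ∈ B, a₁ b * b, ∑ b ∈ B, a₂ b * b)), ?_, ?_⟩
        · simp only [mem_product]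
          exact ⟨⟨hA₁, hA₂⟩, sum_mem_synSet A B (t-1) a₁ hm₁B (himp₁ h₁0),
            sum_mem_synSet A B (t-1) a₂ hm₂B (himp₂ h₂0)⟩
        · show ((∑ b ∈ B, a₂ b * b) - ∑ b ∈ B, a₁ b * b) / (a₁ u - a₂ u) = u
          rw [div_eq_iff hd]
          linear_combination -hkey
  -- counting
  have hTcard := synSet_card_le A B hA
  set M := A.card * (B.card + 1) with hM
  have haM : A.card ≤ M := by rw [hM]; exact Nat.le_mul_of_pos_right _ (by omega)
  have hM1 : 1 ≤ M := le_trans hA haM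
  have hU₁c : U₁.card ≤ A.card * (M ^ (t-1) * M ^ t) := by
    calc U₁.card ≤ (A ×ˢ (T (t-1) ×ˢ T t)).card := card_image_le
      _ = A.card * ((T (t-1)).card * (T t).card) := by simp [card_product]
      _ ≤ A.card * (M ^ (t-1) * M ^ t) :=
          Nat.mul_le_mul_left _ (Nat.mul_le_mul (hTcard _) (hTcard _))
  have hU₂c : U₂.card ≤ A.card * (M ^ t * M ^ (t-1)) := by
    calc U₂.card ≤ (A ×ˢ (T t ×ˢ T (t-1))).card := card_image_le
      _ = A.card * ((T t).card * (T (t-1)).card) := by simp [card_product]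
      _ ≤ A.card * (M ^ t * M ^ (t-1)) :=
          Nat.mul_le_mul_left _ (Nat.mul_le_mul (hTcard _) (hTcard _))
  have hU₃c : U₃.card ≤ A.card * A.card * (M ^ (t-1) * M ^ (t-1)) := by
    calc U₃.card ≤ ((A ×ˢ A) ×ˢ (T (t-1) ×ˢ T (t-1))).card := card_image_le
      _ = A.card * A.card * ((T (t-1)).card * (T (t-1)).card) := by
          simp [card_product, mul_assoc]
      _ ≤ A.card * A.card * (M ^ (t-1) * M ^ (t-1)) :=
          Nat.mul_le_mul_left _ (Nat.mul_le_mul (hTcard _) (hTcard _))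
  have hqle : Fintype.card F ≤ 1 + B.card + U₁.card + U₂.card + U₃.card := by
    have h := card_le_card hcover
    rw [card_univ] at h
    have h4 := card_insert_le (0:F) (B ∪ U₁ ∪ U₂ ∪ U₃)
    have h5 := card_union_le (B ∪ U₁ ∪ U₂) U₃
    have h6 := card_union_le (B ∪ U₁) U₂
    have h7 := card_union_le B U₁
    omega
  have hp1 : M ^ (t-1) * M ^ t = M ^ (2*t-1) := by
    rw [← pow_add]; congr 1; omega
  have hp2 : M ^ (t-1) * M ^ (t-1) = M ^ (2*t-2) := by
    rw [← pow_add]; congr 1; omega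
  have hp3 : M ^ (2*t-1) = M ^ (2*t-2) * M := by
    rw [← pow_succ]; congr 1; omega
  have hqlt : Fintype.card F < 5 * (A.card * M ^ (2*t-1)) := by
    have hn1 : B.card + 1 ≤ M := by rw [hM]; exact Nat.le_mul_of_pos_left _ hA
    have hMe : M ≤ A.card * M ^ (2*t-1) := by
      have h1 : M ≤ M ^ (2*t-1) := by
        calc M = M ^ 1 := (pow_one M).symm
          _ ≤ M ^ (2*t-1) := Nat.pow_le_pow_right hM1 (by omega)
      calc M ≤ M ^ (2*t-1) := h1
        _ ≤ A.card * M ^ (2*t-1) := Nat.le_mul_of_pos_left _ hA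
    have hY : A.card * A.card * M ^ (2*t-2) ≤ A.card * M ^ (2*t-1) := by
      calc A.card * A.card * M ^ (2*t-2) ≤ A.card * M * M ^ (2*t-2) := by
            exact Nat.mul_le_mul_right _ (Nat.mul_le_mul_left _ haM)
        _ = A.card * M ^ (2*t-1) := by rw [hp3]; ring
    have hXpos : 1 ≤ A.card * M ^ (2*t-1) := le_trans hM1 hMe
    rw [mul_comm (M ^ t) (M ^ (t-1))] at hU₂c
    rw [hp1] at hU₁c hU₂c
    rw [hp2] at hU₃c
    set X := A.card * M ^ (2*t-1) with hX
    set Y := A.card * A.card * M ^ (2*t-2) with hYd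
    omega
  -- pass to the reals
  have ha0 : (0:ℝ) < (A.card : ℝ) := by exact_mod_cast hA
  have hMpos : (0:ℝ) < (M:ℝ) := by exact_mod_cast hM1
  have hxR : (Fintype.card F : ℝ) < 5 * A.card * (M:ℝ) ^ (2*t-1 : ℕ) := by
    rw [show (5:ℝ) * A.card * (M:ℝ) ^ (2*t-1:ℕ) = ((5 * (A.card * M ^ (2*t-1)) : ℕ) : ℝ) by
      push_cast; ring]
    exact_mod_cast hqlt
  have h5a : (0:ℝ) < 5 * (A.card:ℝ) := by positivity
  have hdiv : (Fintype.card F : ℝ) / (5*A.card) < (M:ℝ) ^ (2*t-1:ℕ) := by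
    rw [div_lt_iff₀ h5a]
    calc (Fintype.card F : ℝ) < 5 * A.card * (M:ℝ) ^ (2*t-1:ℕ) := hxR
      _ = (M:ℝ) ^ (2*t-1:ℕ) * (5*A.card) := by ring
  have htR : (2:ℝ) ≤ (t:ℝ) := by exact_mod_cast ht
  have hexp : (0:ℝ) < 2*(t:ℝ)-1 := by linarith
  have hcast : ((2*t-1:ℕ):ℝ) = 2*(t:ℝ)-1 := by
    have h1 : (1:ℕ) ≤ 2*t := by omega
    push_cast [h1]
    ring
  have hfin : ((Fintype.card F : ℝ)/(5*A.card)) ^ ((1:ℝ)/(2*(t:ℝ)-1)) < (M:ℝ) := by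
    have h0 : (0:ℝ) ≤ (Fintype.card F : ℝ)/(5*A.card) := by positivity
    have hmono := Real.rpow_lt_rpow h0 hdiv (by positivity : (0:ℝ) < 1/(2*(t:ℝ)-1))
    rwa [← Real.rpow_natCast (M:ℝ) (2*t-1), ← Real.rpow_mul hMpos.le, hcast,
      (show (2*(t:ℝ)-1) * (1/(2*(t:ℝ)-1)) = 1 by field_simp), Real.rpow_one] at hmono
  have hMcast : (M:ℝ) = (A.card:ℝ) * ((B.card:ℝ) + 1) := by
    rw [hM]; push_cast; ring
  rw [gt_iff_lt, sub_lt_iff_lt_add, div_lt_iff₀ ha0]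
  calc ((Fintype.card F : ℝ) / (5 * A.card)) ^ ((1:ℝ) / (2 * (t:ℝ) - 1)) < (M:ℝ) := hfin
    _ = ((B.card:ℝ) + 1) * (A.card:ℝ) := by rw [hMcast]; ring
end
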